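/- For distinct transactions 1, 2 and distinct variables x, y, the history h = [rd_1(x), rd_2(x), rd_1(y), rd_2(y), wr_1(x), wr_2(y), cmt_1, cmt_2] (a history produced by the CoreDSTM algorithm) is not opaque: there is no sequential history strictly equivalent to h. (In h, rd_2(x) conflicts with cmt_1 and rd_1(y) conflicts with cmt_2, so a strictly equivalent sequential history would need transaction 2 to precede transaction 1 and transaction 1 to precede transaction 2.) -/

import Mathlib

/-- Statements of the conflict-based setting: reads, writes (without values),
commits and aborts, each tagged with a transaction identifier (a positive natural). -/
inductive Stmt : Type where
  | rd (t : ℕ+) (x : ℕ)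
  | wr (t : ℕ+) (x : ℕ)
  | cmt (t : ℕ+)
  | abrt (t : ℕ+)
  deriving DecidableEq

/-- The transaction identifier of a statement. -/
def Stmt.txn : Stmt → ℕ+
  | .rd t _ => t
  | .wr t _ => t
  | .cmt t => t
  | .abrt t => t

/-- The variable mentioned by a statement, if any. -/
def Stmt.var? : Stmt → Option ℕ
  | .rd _ x => some x
  | .wr _ x => some x
  | _ => none

/-- Projection of a history onto a transaction. -/
def proj (h : List Stmt) (t : ℕ+) : List Stmt :=
  h.filter (fun s => s.txn = t)

/-- Transaction `t` occurs in `h`. -/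
def occurs (h : List Stmt) (t : ℕ+) : Prop := proj h t ≠ []

/-- Transaction `t` is committing in `h`. -/
def committing (h : List Stmt) (t : ℕ+) : Prop :=
  (proj h t).getLast? = some (Stmt.cmt t)

/-- Transaction `t` is aborting in `h`. -/
def aborting (h : List Stmt) (t : ℕ+) : Prop :=
  (proj h t).getLast? = some (Stmt.abrt t)

/-- Transaction `t` is finished in `h`. -/
def finished (h : List Stmt) (t : ℕ+) : Prop :=
  committing h t ∨ aborting h t

/-- Transaction `t` is live in `h`: it occurs but is not finished. -/
def live (h : List Stmt) (t : ℕ+) : Prop := occurs h t ∧ ¬ finished h t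

/-- `t1 <_h t2`: both occur and every statement of `t1` occurs strictly before
every statement of `t2` (equivalently, the last statement of `t1` is before the
first statement of `t2`). -/
def precedes (h : List Stmt) (t1 t2 : ℕ+) : Prop :=
  occurs h t1 ∧ occurs h t2 ∧
  ∀ (i j : ℕ) (s1 s2 : Stmt), h[i]? = some s1 → h[j]? = some s2 →
    s1.txn = t1 → s2.txn = t2 → i < j

/-- A history is sequential if any two distinct occurring transactions are
comparable under `<_h`. -/
def sequential (h : List Stmt) : Prop :=
  ∀ t1 t2, t1 ≠ t2 → occurs h t1 → occurs h t2 →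
    precedes h t1 t2 ∨ precedes h t2 t1

/-- Transaction `t` writes to variable `x` in `h`. -/
def writes (h : List Stmt) (t : ℕ+) (x : ℕ) : Prop := Stmt.wr t x ∈ h

/-- The occurrence at position `i` in `h` is a global read `rd_t(x)`:
no `wr_t(x)` occurs before it. -/
def globalRead (h : List Stmt) (i : ℕ) (t : ℕ+) (x : ℕ) : Prop :=
  h[i]? = some (Stmt.rd t x) ∧ ∀ j, j < i → h[j]? ≠ some (Stmt.wr t x)

/-- The statement occurrences at positions `i` and `j` of `h` (belonging to
distinct transactions) are in conflict. -/
def conflict (h : List Stmt) (i j : ℕ) : Prop :=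
  ∃ t1 t2, t1 ≠ t2 ∧
    ((∃ x, globalRead h i t1 x ∧ h[j]? = some (Stmt.cmt t2) ∧ writes h t2 x) ∨
     (∃ x, globalRead h j t1 x ∧ h[i]? = some (Stmt.cmt t2) ∧ writes h t2 x) ∨
     (h[i]? = some (Stmt.cmt t1) ∧ h[j]? = some (Stmt.cmt t2) ∧
      ∃ x, writes h t1 x ∧ writes h t2 x))

/-- Position `i` of `h` and position `i'` of `h'` carry the same statement `s`,
and it is in both cases the same (`k`-th) occurrence of `s`. -/
def corresponds (h h' : List Stmt) (i i' : ℕ) : Prop :=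
  ∃ s, h[i]? = some s ∧ h'[i']? = some s ∧
    (h.take i).count s = (h'.take i').count s

/-- `h'` is strictly equivalent to `h`: it is a rearrangement with the same
per-transaction projections, preserving the real-time order of finished
transactions and the relative order of conflicting statement occurrences. -/
def strictEquiv (h h' : List Stmt) : Prop :=
  h.Perm h' ∧
  (∀ t, proj h t = proj h' t) ∧
  (∀ t1 t2, t1 ≠ t2 → precedes h t1 t2 → finished h t1 → precedes h' t1 t2) ∧
  (∀ i j i' j', i < j → conflict h i j →
     corresponds h h' i i' → corresponds h h' j j' → i' < j')

/-- A history is opaque if some sequential history is strictly equivalent to it. -/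
def IsOpaque (h : List Stmt) : Prop :=
  ∃ h', sequential h' ∧ strictEquiv h h'

lemma count_take_indexOf {α : Type*} [DecidableEq α] (l : List α) (s : α) :
    (l.take (l.idxOf s)).count s = 0 := by
  induction l with
  | nil => simp
  | cons a l ih =>
    by_cases h : a = s
    · subst h; simp [List.idxOf_cons_self]
    · simp [List.idxOf_cons_ne _ h, List.count_cons, h, ih]

lemma getElem?_indexOf {α : Type*} [DecidableEq α] {l : List α} {s : α} (h : s ∈ l) :
    l[l.idxOf s]? = some s := by
  rw [List.getElem?_eq_getElem (List.idxOf_lt_length_iff.mpr h)]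
  simp [List.getElem_idxOf]

/-- The CoreDSTM history
`h = [rd_1(x), rd_2(x), rd_1(y), rd_2(y), wr_1(x), wr_2(y), cmt_1, cmt_2]`
(for distinct variables `x`, `y`) is not opaque. -/
theorem coreDSTM_history_not_opaque (x y : ℕ) (hxy : x ≠ y) :
    ¬ IsOpaque [Stmt.rd 1 x, Stmt.rd 2 x, Stmt.rd 1 y, Stmt.rd 2 y,
                Stmt.wr 1 x, Stmt.wr 2 y, Stmt.cmt 1, Stmt.cmt 2] := by
  set h : List Stmt := [Stmt.rd 1 x, Stmt.rd 2 x, Stmt.rd 1 y, Stmt.rd 2 y,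
                Stmt.wr 1 x, Stmt.wr 2 y, Stmt.cmt 1, Stmt.cmt 2] with hdef
  rintro ⟨h', hseq, hperm, hproj, _hrt, hconf⟩
  -- membership of the four key statements in h'
  have mem1 : Stmt.rd 2 x ∈ h' := hperm.mem_iff.mp (by simp [hdef])
  have mem2 : Stmt.cmt 1 ∈ h' := hperm.mem_iff.mp (by simp [hdef])
  have mem3 : Stmt.rd 1 y ∈ h' := hperm.mem_iff.mp (by simp [hdef])
  have mem4 : Stmt.cmt 2 ∈ h' := hperm.mem_iff.mp (by simp [hdef])
  -- conflict 1: rd_2(x) at position 1 with cmt_1 at position 6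
  have hc1 : conflict h 1 6 := by
    refine ⟨2, 1, by decide, Or.inl ⟨x, ⟨rfl, ?_⟩, rfl, by simp [writes, hdef]⟩⟩
    intro j hj
    interval_cases j
    simp [hdef]
  -- conflict 2: rd_1(y) at position 2 with cmt_2 at position 7
  have hc2 : conflict h 2 7 := by
    refine ⟨1, 2, by decide, Or.inl ⟨y, ⟨rfl, ?_⟩, rfl, by simp [writes, hdef]⟩⟩
    intro j hj
    interval_cases j <;> simp [hdef, Ne.symm hxy]
  have corr : ∀ (i : ℕ) (s : Stmt), h[i]? = some s → (h.take i).count s = 0 →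
      s ∈ h' → corresponds h h' i (h'.idxOf s) :=
    fun i s hi hcnt hm =>
      ⟨s, hi, getElem?_indexOf hm, by rw [hcnt, count_take_indexOf]⟩
  have ord1 : h'.idxOf (Stmt.rd 2 x) < h'.idxOf (Stmt.cmt 1) :=
    hconf 1 6 _ _ (by norm_num) hc1
      (corr 1 _ rfl (by simp [hdef]) mem1)
      (corr 6 _ rfl (by simp [hdef]) mem2)
  have ord2 : h'.idxOf (Stmt.rd 1 y) < h'.idxOf (Stmt.cmt 2) :=
    hconf 2 7 _ _ (by norm_num) hc2
      (corr 2 _ rfl (by simp [hdef, List.count_cons, Ne.symm hxy, hxy]) mem3)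
      (corr 7 _ rfl (by simp [hdef]) mem4)
  -- both transactions occur in h'
  have occ1 : occurs h' 1 := by
    rw [occurs, ← hproj 1]
    simp [proj, hdef, Stmt.txn, List.filter]
  have occ2 : occurs h' 2 := by
    rw [occurs, ← hproj 2]
    simp [proj, hdef, Stmt.txn, List.filter]
  rcases hseq 1 2 (by decide) occ1 occ2 with ⟨_, _, hlt⟩ | ⟨_, _, hlt⟩
  · exact absurd (hlt _ _ _ _ (getElem?_indexOf mem2) (getElem?_indexOf mem1) rfl rfl)
      (by omega)
  · exact absurd (hlt _ _ _ _ (getElem?_indexOf mem4) (getElem?_indexOf mem3) rfl rfl)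
      (by omega)
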